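/- arXiv:2406.12994 — 6 statements merged into one kernel-verified Lean document; each statement's English description precedes it below -/
import Mathlib

section
/- Let T ∈ B(H). Suppose that for every non-zero x ∈ H there exists a conjugation C on H such that Cx = x and C(TT*)C = T*T. Then T is normal. -/
open scoped ComplexInnerProductSpace

/-- A conjugation on a complex Hilbert space: a conjugate-linear involutive isometry. -/
def IsConjugation {H : Type*} [NormedAddCommGroup H] [InnerProductSpace ℂ H]
    (C : H → H) : Prop :=
  (∀ x y : H, C (x + y) = C x + C y) ∧
  (∀ (a : ℂ) (x : H), C (a • x) = (starRingEnd ℂ) a • C x) ∧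
  (∀ x : H, C (C x) = x) ∧
  (∀ h k : H, ⟪C h, C k⟫ = ⟪k, h⟫)

/-- If for every non-zero `x` there is a conjugation `C` with `Cx = x` and
`C(TT*)C = T*T`, then `T` is normal. -/
theorem normal_of_cNormal_fixing_every_vector {H : Type*} [NormedAddCommGroup H]
    [InnerProductSpace ℂ H] [CompleteSpace H] (T : H →L[ℂ] H)
    (h : ∀ x : H, x ≠ 0 → ∃ C : H → H, IsConjugation C ∧ C x = x ∧
      ∀ k : H, C (T (ContinuousLinearMap.adjoint T (C k))) =
        ContinuousLinearMap.adjoint T (T k)) :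
    ContinuousLinearMap.adjoint T ∘L T = T ∘L ContinuousLinearMap.adjoint T := by
  set T' := ContinuousLinearMap.adjoint T with hT'
  have key : ∀ x : H, ⟪(T' ∘L T) x, x⟫ = ⟪(T ∘L T') x, x⟫ := by
    intro x
    rcases eq_or_ne x 0 with rfl | hx
    · simp
    obtain ⟨C, ⟨_, _, _, hinner⟩, hfix, heq⟩ := h x hx
    have h1 : C (T (T' x)) = T' (T x) := by
      have := heq x
      rwa [hfix] at this
    have h2 : ⟪T' (T x), x⟫ = ⟪x, T (T' x)⟫ := by
      calc ⟪T' (T x), x⟫ = ⟪C (T (T' x)), C x⟫ := by rw [h1, hfix]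
        _ = ⟪x, T (T' x)⟫ := hinner _ _
    have h3 : ⟪T (T' x), x⟫ = ⟪T' x, T' x⟫ :=
      (ContinuousLinearMap.adjoint_inner_right T (T' x) x).symm
    have h4 : ⟪x, T (T' x)⟫ = (starRingEnd ℂ) ⟪T (T' x), x⟫ :=
      (inner_conj_symm _ _).symm
    simp only [ContinuousLinearMap.comp_apply]
    rw [h2, h4, h3, inner_conj_symm]
  have := (ext_inner_map ((T' ∘L T) : H →ₗ[ℂ] H) ((T ∘L T') : H →ₗ[ℂ] H)).mp key
  exact ContinuousLinearMap.coe_injective this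
end

section
/- Let U ∈ B(H) be unitary and J a conjugation on H. Then U = JC for some conjugation C on H if and only if JUJ = U*. -/
open scoped ComplexInnerProductSpace

/-- For a unitary `U` and a conjugation `J`, `U = JC` for some conjugation `C`
iff `JUJ = U*`. -/
theorem unitary_eq_conjugation_comp_iff {H : Type*} [NormedAddCommGroup H]
    [InnerProductSpace ℂ H] [CompleteSpace H] (U : H →L[ℂ] H)
    (hU_inner : ∀ h k : H, ⟪U h, U k⟫ = ⟪h, k⟫) (hU_surj : Function.Surjective U)
    (J : H → H) (hJ : IsConjugation J) :
    (∃ C : H → H, IsConjugation C ∧ ∀ h : H, U h = J (C h)) ↔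
      (∀ h : H, J (U (J h)) = ContinuousLinearMap.adjoint U h) := by
  obtain ⟨hJadd, hJsmul, hJinv, hJinner⟩ := hJ
  have hUadj : ∀ h : H, ContinuousLinearMap.adjoint U (U h) = h := by
    intro h
    apply ext_inner_right ℂ
    intro y
    rw [ContinuousLinearMap.adjoint_inner_left, hU_inner]
  constructor
  · rintro ⟨C, ⟨hCadd, hCsmul, hCinv, hCinner⟩, hUC⟩ h
    have key : C (J h) = ContinuousLinearMap.adjoint U h := by
      apply ext_inner_right ℂ
      intro k
      rw [ContinuousLinearMap.adjoint_inner_left]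
      calc ⟪C (J h), k⟫ = ⟪C (J h), C (C k)⟫ := by rw [hCinv]
        _ = ⟪C k, J h⟫ := hCinner _ _
        _ = ⟪J (J (C k)), J h⟫ := by rw [hJinv]
        _ = ⟪h, J (C k)⟫ := hJinner _ _
        _ = ⟪h, U k⟫ := by rw [← hUC]
    rw [← key, hUC (J h), hJinv]
  · intro hcom
    refine ⟨fun h => J (U h), ⟨?_, ?_, ?_, ?_⟩, ?_⟩
    · intro x y; dsimp only; rw [map_add, hJadd]
    · intro a x; dsimp only; rw [map_smul, hJsmul]
    · intro x; dsimp only; rw [hcom (U x), hUadj]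
    · intro h k; dsimp only; rw [hJinner, hU_inner]
    · intro h; dsimp only; rw [hJinv]
end

section
/- Let N ∈ B(H) be a normal operator. If there exists an anti-unitary operator V on H (a conjugate-linear surjective isometry) with VNV⁻¹ = -N*, then there exists a unitary operator U ∈ B(H) with UNU* = -N. (One may use that every normal operator N admits a conjugation J with JNJ = N*.) -/
open scoped ComplexInnerProductSpace

/-- An anti-unitary operator: a conjugate-linear surjective isometry. -/
def IsAntiUnitary {H : Type*} [NormedAddCommGroup H] [InnerProductSpace ℂ H]
    (V : H → H) : Prop :=
  (∀ x y : H, V (x + y) = V x + V y) ∧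
  (∀ (a : ℂ) (x : H), V (a • x) = (starRingEnd ℂ) a • V x) ∧
  Function.Surjective V ∧
  (∀ x : H, ‖V x‖ = ‖x‖)

/-- If a normal operator `N` satisfies `VNV⁻¹ = -N*` for some anti-unitary `V`,
then there exists a unitary `U` with `UNU* = -N` (equivalently `UN = -NU`).
One may use that every normal operator admits a conjugation `J` with `JNJ = N*`. -/
theorem antiunitary_skew_implies_unitary_anticommute {H : Type*} [NormedAddCommGroup H]
    [InnerProductSpace ℂ H] [CompleteSpace H] (N : H →L[ℂ] H)
    (hN : N ∘L ContinuousLinearMap.adjoint N = ContinuousLinearMap.adjoint N ∘L N)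
    (hGP : ∃ J : H → H, IsConjugation J ∧
      ∀ h : H, J (N (J h)) = ContinuousLinearMap.adjoint N h)
    (V : H → H) (hV : IsAntiUnitary V)
    (hVN : ∀ h : H, V (N h) = -(ContinuousLinearMap.adjoint N (V h))) :
    ∃ U : H ≃ₗᵢ[ℂ] H, ∀ h : H, U (N h) = -(N (U h)) := by
  obtain ⟨J, ⟨hJadd, hJsmul, hJinv, hJinner⟩, hJN⟩ := hGP
  obtain ⟨hVadd, hVsmul, hVsurj, hVnorm⟩ := hV
  -- V preserves real parts of inner products
  have hre : ∀ x y : H, (⟪V x, V y⟫ : ℂ).re = (⟪x, y⟫ : ℂ).re := by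
    intro x y
    have h1 : ‖V x + V y‖ = ‖x + y‖ := by rw [← hVadd, hVnorm]
    have e1 := @norm_add_sq ℂ H _ _ _ (V x) (V y)
    have e2 := @norm_add_sq ℂ H _ _ _ x y
    rw [h1, hVnorm, hVnorm] at e1
    simp only [RCLike.re_to_complex] at e1 e2
    linarith
  have him : ∀ x y : H, (⟪V x, V y⟫ : ℂ).im = -((⟪x, y⟫ : ℂ).im) := by
    intro x y
    have h := hre (Complex.I • x) y
    rw [hVsmul] at h
    rw [inner_smul_left, inner_smul_left] at h
    simp only [Complex.conj_I, map_neg, Complex.mul_re, Complex.neg_re, Complex.neg_im,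
      Complex.I_re, Complex.I_im] at h
    linarith
  have hVinner : ∀ x y : H, (⟪V x, V y⟫ : ℂ) = ⟪y, x⟫ := by
    intro x y
    have hc : (⟪y, x⟫ : ℂ) = (starRingEnd ℂ) ⟪x, y⟫ := (inner_conj_symm y x).symm
    apply Complex.ext
    · rw [hre, hc, Complex.conj_re]
    · rw [him, hc, Complex.conj_im]
  -- V intertwines N* with -N
  have hVNstar : ∀ h : H, V (ContinuousLinearMap.adjoint N h) = -(N (V h)) := by
    intro h
    apply ext_inner_right ℂ
    intro y
    obtain ⟨w, rfl⟩ := hVsurj y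
    rw [hVinner, ContinuousLinearMap.adjoint_inner_right, inner_neg_left]
    have hNw : (ContinuousLinearMap.adjoint N) (V w) = -(V (N w)) := by
      rw [hVN w, neg_neg]
    have : (⟪N (V h), V w⟫ : ℂ) = ⟪V h, (ContinuousLinearMap.adjoint N) (V w)⟫ :=
      (ContinuousLinearMap.adjoint_inner_right N (V h) (V w)).symm
    rw [this, hNw, inner_neg_right, hVinner]
    ring
  -- J properties
  have hJN' : ∀ h : H, J (N h) = ContinuousLinearMap.adjoint N (J h) := by
    intro h
    have := hJN (J h)
    rwa [hJinv] at this
  have hJnorm : ∀ x : H, ‖J x‖ = ‖x‖ := by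
    intro x
    rw [@norm_eq_sqrt_re_inner ℂ, @norm_eq_sqrt_re_inner ℂ H _ _ _ x, hJinner]
  -- the linear map U = V ∘ J
  let f : H →ₗ[ℂ] H :=
    { toFun := fun x => V (J x)
      map_add' := by
        intro x y
        show V (J (x + y)) = V (J x) + V (J y)
        rw [hJadd, hVadd]
      map_smul' := by
        intro a x
        show V (J (a • x)) = a • V (J x)
        rw [hJsmul, hVsmul, Complex.conj_conj] }
  have hfnorm : ∀ x : H, ‖f x‖ = ‖x‖ := by
    intro x
    show ‖V (J x)‖ = ‖x‖
    rw [hVnorm, hJnorm]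
  have hfsurj : Function.Surjective f := by
    intro y
    obtain ⟨w, rfl⟩ := hVsurj y
    exact ⟨J w, by show V (J (J w)) = V w; rw [hJinv]⟩
  let fi : H →ₗᵢ[ℂ] H := ⟨f, hfnorm⟩
  refine ⟨LinearIsometryEquiv.ofSurjective fi hfsurj, ?_⟩
  intro h
  show V (J (N h)) = -(N (V (J h)))
  rw [hJN', hVNstar]
end

section
/- Let M be a closed subspace of a Hilbert space H that is hyperinvariant for a bounded normal operator N (i.e., M is invariant under every bounded operator commuting with N). Then for every conjugation C on H satisfying CNC = N*, one has CM ⊆ M. (Hint: P_M = E_N(Δ) for some Borel set Δ by Radjavi–Rosenthal, and C commutes with every spectral projection of N.) -/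
open scoped ComplexInnerProductSpace

open ContinuousLinearMap in
/-- If a closed subspace is invariant under `T` and `T*`, the orthogonal projection onto it
commutes with `T`. -/
theorem proj_comm_aux {H : Type*} [NormedAddCommGroup H] [InnerProductSpace ℂ H] [CompleteSpace H]
    (T : H →L[ℂ] H) (K : Submodule ℂ H) [CompleteSpace K]
    (hT : ∀ v ∈ K, T v ∈ K) (hT' : ∀ v ∈ K, adjoint T v ∈ K) (z : H) :
    (Submodule.orthogonalProjectionOnto K (T z) : H) = T (Submodule.orthogonalProjectionOnto K z) := by
  apply Submodule.eq_starProjection_of_mem_orthogonal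
  · exact hT _ (Submodule.orthogonalProjectionOnto K z).2
  · have hz : z - (Submodule.orthogonalProjectionOnto K z : H) ∈ Kᗮ := Submodule.sub_starProjection_mem_orthogonal z
    have h2 : T z - T (Submodule.orthogonalProjectionOnto K z) = T (z - Submodule.orthogonalProjectionOnto K z) := by
      rw [map_sub]
    rw [h2]
    intro v hv
    rw [Submodule.mem_orthogonal] at hz
    calc ⟪v, T (z - Submodule.orthogonalProjectionOnto K z)⟫
        = ⟪adjoint T v, z - Submodule.orthogonalProjectionOnto K z⟫ := (adjoint_inner_left T _ _).symm
      _ = 0 := hz _ (hT' v hv)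

/-- A hyperinvariant subspace of a normal operator is invariant under every conjugation
`C` satisfying `CNC = N*`. -/
theorem conjugation_preserves_hyperinvariant {H : Type*} [NormedAddCommGroup H]
    [InnerProductSpace ℂ H] [CompleteSpace H] (N : H →L[ℂ] H)
    (hN : N ∘L ContinuousLinearMap.adjoint N = ContinuousLinearMap.adjoint N ∘L N)
    (M : Submodule ℂ H) (hMclosed : IsClosed (M : Set H))
    (hMhyper : ∀ S : H →L[ℂ] H, S ∘L N = N ∘L S → ∀ m ∈ M, S m ∈ M)
    (C : H → H) (hC : IsConjugation C)
    (hCN : ∀ h : H, C (N (C h)) = ContinuousLinearMap.adjoint N h) :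
    ∀ m ∈ M, C m ∈ M := by
  classical
  open ContinuousLinearMap in
  obtain ⟨Cadd, Csmul, Cinv, Cinner⟩ := hC
  set N' := ContinuousLinearMap.adjoint N with hN'def
  -- basic properties of C
  have Czero : C 0 = 0 := by
    have := Csmul 0 0; simpa using this
  have Csub : ∀ a b : H, C (a - b) = C a - C b := by
    intro a b
    have hneg : C (-b) = -C b := by
      have := Csmul (-1) b; simpa using this
    rw [sub_eq_add_neg, Cadd, hneg, sub_eq_add_neg]
  have Cnorm : ∀ u : H, ‖C u‖ = ‖u‖ := by
    intro u
    rw [@norm_eq_sqrt_re_inner ℂ, @norm_eq_sqrt_re_inner ℂ, Cinner]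
  -- C intertwines N and N'
  have CN : ∀ h : H, C (N h) = N' (C h) := by
    intro h
    have := hCN (C h)
    rwa [Cinv] at this
  have NC : ∀ h : H, N (C h) = C (N' h) := by
    intro h
    have := congrArg C (hCN h)
    rwa [Cinv] at this
  haveI : CompleteSpace M := hMclosed.completeSpace_coe
  -- M is invariant under N and N'
  have hNM : ∀ v ∈ M, N v ∈ M := fun v hv => hMhyper N rfl v hv
  have hN'M : ∀ v ∈ M, N' v ∈ M := fun v hv => hMhyper N' hN.symm v hv
  have hprojM : ∀ z : H, (Submodule.orthogonalProjectionOnto M (N' z) : H) = N' (Submodule.orthogonalProjectionOnto M z) := by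
    intro z
    refine proj_comm_aux N' M hN'M ?_ z
    intro v hv
    rw [adjoint_adjoint]
    exact hNM v hv
  -- the operator S = C ∘ P_M ∘ C
  have Sbound : ∀ z : H, ‖C ((Submodule.orthogonalProjectionOnto M (C z) : H))‖ ≤ 1 * ‖z‖ := by
    intro z
    rw [Cnorm, one_mul]
    calc ‖(Submodule.orthogonalProjectionOnto M (C z) : H)‖ ≤ ‖Submodule.orthogonalProjectionOnto M‖ * ‖C z‖ :=
          (Submodule.orthogonalProjectionOnto M).le_opNorm _
      _ ≤ 1 * ‖C z‖ := by
          have := Submodule.orthogonalProjectionOnto_norm_le M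
          have h2 : (0:ℝ) ≤ ‖C z‖ := norm_nonneg _
          nlinarith
      _ = ‖z‖ := by rw [one_mul, Cnorm]
  let S : H →L[ℂ] H := LinearMap.mkContinuous
    { toFun := fun z => C ((Submodule.orthogonalProjectionOnto M (C z) : H))
      map_add' := by
        intro a b
        show C ((Submodule.orthogonalProjectionOnto M (C (a + b)) : H)) =
          C ((Submodule.orthogonalProjectionOnto M (C a) : H)) + C ((Submodule.orthogonalProjectionOnto M (C b) : H))
        rw [Cadd, map_add, Submodule.coe_add, Cadd]
      map_smul' := by
        intro a z
        show C ((Submodule.orthogonalProjectionOnto M (C (a • z)) : H)) =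
          a • C ((Submodule.orthogonalProjectionOnto M (C z) : H))
        rw [Csmul, map_smul, Submodule.coe_smul, Csmul]
        simp }
    1 Sbound
  have hSapp : ∀ z : H, S z = C ((Submodule.orthogonalProjectionOnto M (C z) : H)) := fun z => rfl
  have hSN : S ∘L N = N ∘L S := by
    ext z
    show S (N z) = N (S z)
    rw [hSapp, hSapp, CN, hprojM, ← NC]
  -- fix m, construct x and y
  intro m hm
  set x := C m - (Submodule.orthogonalProjectionOnto M (C m) : H) with hxdef
  have hxOrth : x ∈ Mᗮ := Submodule.sub_starProjection_mem_orthogonal (C m)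
  set y := C x with hydef
  have hyM : y ∈ M := by
    have : y = m - S m := by
      rw [hydef, hxdef, Csub, Cinv, hSapp]
    rw [this]
    exact M.sub_mem hm (hMhyper S hSN m hm)
  have hCy : C y = x := by rw [hydef, Cinv]
  -- the commutative star algebra generated by N
  haveI hsn : IsStarNormal N :=
    ⟨show star N * N = N * star N by rw [star_eq_adjoint, mul_def, mul_def, ← hN]⟩
  set 𝒜 := StarAlgebra.adjoin ℂ ({N} : Set (H →L[ℂ] H)) with h𝒜
  have hNmem : N ∈ 𝒜 := StarAlgebra.self_mem_adjoin_singleton ℂ N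
  have hcomm : ∀ T ∈ 𝒜, ∀ T' ∈ 𝒜, T * T' = T' * T := by
    intro T hT T' hT'
    exact congrArg Subtype.val (mul_comm (⟨T, hT⟩ : 𝒜) ⟨T', hT'⟩)
  -- the cyclic subspace W = 𝒜 y
  let W : Submodule ℂ H :=
    { carrier := {z | ∃ T, T ∈ 𝒜 ∧ T y = z}
      add_mem' := by
        rintro a b ⟨T, hT, rfl⟩ ⟨T', hT', rfl⟩
        exact ⟨T + T', add_mem hT hT', ContinuousLinearMap.add_apply T T' y⟩
      zero_mem' := ⟨0, zero_mem _, ContinuousLinearMap.zero_apply y⟩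
      smul_mem' := by
        rintro a z ⟨T, hT, rfl⟩
        exact ⟨a • T, SMulMemClass.smul_mem a hT, ContinuousLinearMap.smul_apply T a y⟩ }
  have hWmem : ∀ w : W, ∃ T, T ∈ 𝒜 ∧ T y = (w : H) := fun w => w.2
  -- the isometry j on W
  have hkey : ∀ T ∈ 𝒜, ‖star T y‖ = ‖T y‖ := by
    intro T hT
    rw [@norm_eq_sqrt_re_inner ℂ, @norm_eq_sqrt_re_inner ℂ]
    congr 2
    calc ⟪star T y, star T y⟫ = ⟪y, T (star T y)⟫ := by
          rw [star_eq_adjoint]; exact adjoint_inner_left T _ y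
      _ = ⟪y, (T * star T) y⟫ := by rw [mul_apply_eq_comp]
      _ = ⟪y, (star T * T) y⟫ := by rw [hcomm T hT (star T) (star_mem hT)]
      _ = ⟪y, star T (T y)⟫ := by rw [mul_apply_eq_comp]
      _ = ⟪T y, T y⟫ := by rw [star_eq_adjoint]; exact adjoint_inner_right T y _
  have hwd : ∀ T ∈ 𝒜, ∀ T' ∈ 𝒜, T y = T' y → star T y = star T' y := by
    intro T hT T' hT' h
    have h0 : ‖star T y - star T' y‖ = 0 := by
      have h1 : star T y - star T' y = star (T - T') y := by
        rw [star_sub, ContinuousLinearMap.sub_apply]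
      rw [h1, hkey _ (sub_mem hT hT'), ContinuousLinearMap.sub_apply, h, sub_self, norm_zero]
    rw [norm_eq_zero] at h0
    exact sub_eq_zero.mp h0
  let j : W → H := fun w => star (hWmem w).choose y
  have hj : ∀ (T) (_ : T ∈ 𝒜) (w : W), (w : H) = T y → j w = star T y := by
    intro T hT w hw
    exact hwd _ (hWmem w).choose_spec.1 _ hT (by rw [(hWmem w).choose_spec.2, hw])
  have hjnorm : ∀ w : W, ‖j w‖ = ‖w‖ := by
    intro w
    show ‖star (hWmem w).choose y‖ = ‖w‖
    rw [hkey _ (hWmem w).choose_spec.1, (hWmem w).choose_spec.2]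
    rfl
  have hjadd : ∀ w w' : W, j (w + w') = j w + j w' := by
    intro w w'
    obtain ⟨T, hT, hTw⟩ := hWmem w
    obtain ⟨T', hT', hTw'⟩ := hWmem w'
    rw [hj T hT w hTw.symm, hj T' hT' w' hTw'.symm,
      hj (T + T') (add_mem hT hT') (w + w')
        (by rw [ContinuousLinearMap.add_apply, hTw, hTw']; rfl),
      star_add, ContinuousLinearMap.add_apply]
  have hjsmul : ∀ (a : ℂ) (w : W), j (a • w) = (starRingEnd ℂ) a • j w := by
    intro a w
    obtain ⟨T, hT, hTw⟩ := hWmem w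
    rw [hj T hT w hTw.symm,
      hj (a • T) (SMulMemClass.smul_mem a hT) (a • w)
        (by rw [ContinuousLinearMap.smul_apply, hTw]; rfl),
      star_smul, ContinuousLinearMap.smul_apply]
    rfl
  -- bundle j as a real-linear isometric map
  let jR : W →L[ℝ] H := LinearMap.mkContinuous
    { toFun := j
      map_add' := hjadd
      map_smul' := by
        intro r w
        show j (r • w) = r • j w
        have h1 : (r : ℂ) • w = r • w := Complex.coe_smul r w
        rw [← h1, hjsmul]
        simp [Complex.coe_smul] }
    1 (fun w => by show ‖j w‖ ≤ 1 * ‖w‖; rw [hjnorm, one_mul])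
  have hjR : ∀ w : W, jR w = j w := fun w => rfl
  -- the closure Z of W and the extension of j
  set Z := W.topologicalClosure with hZdef
  haveI : CompleteSpace Z := W.isClosed_topologicalClosure.completeSpace_coe
  have hZmemIff : ∀ v : H, v ∈ Z ↔ v ∈ closure (W : Set H) := fun v => by
    rw [hZdef, ← SetLike.mem_coe, Submodule.topologicalClosure_coe]
  let e : W →L[ℝ] Z := LinearMap.mkContinuous
    { toFun := fun w => ⟨(w : H), W.le_topologicalClosure w.2⟩
      map_add' := fun a b => rfl
      map_smul' := fun r a => rfl }
    1 (fun w => by rw [one_mul]; rfl)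
  have he : ∀ w : W, ((e w : Z) : H) = (w : H) := fun w => rfl
  have hdense : DenseRange e := by
    rw [Metric.denseRange_iff]
    intro z r hr
    have hz : (z : H) ∈ closure (W : Set H) := (hZmemIff _).mp z.2
    rw [Metric.mem_closure_iff] at hz
    obtain ⟨w, hwW, hw⟩ := hz r hr
    exact ⟨⟨w, hwW⟩, hw⟩
  have hui : IsUniformInducing e := by
    apply Isometry.isUniformInducing
    apply Isometry.of_dist_eq
    intro a b
    rw [Subtype.dist_eq]
    rfl
  let jZ : Z →L[ℝ] H := jR.extend e
  have hjZ : ∀ w : W, jZ (e w) = jR w := fun w => ContinuousLinearMap.extend_eq jR hdense hui w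
  -- jZ is conjugate-linear over ℂ
  have hjZsmul : ∀ (a : ℂ) (u : Z), jZ (a • u) = (starRingEnd ℂ) a • jZ u := by
    intro a u
    refine hdense.induction_on u ?_ ?_
    · apply isClosed_eq
      · exact jZ.continuous.comp (continuous_const_smul a)
      · exact (jZ.continuous.const_smul _)
    · intro w
      have h1 : a • e w = e (a • w) := rfl
      rw [h1, hjZ, hjZ, hjR, hjR, hjsmul]
  -- N and N' map Z into Z
  have hNW : ∀ v ∈ W, N v ∈ W := by
    rintro v ⟨T, hT, rfl⟩
    exact ⟨N * T, mul_mem hNmem hT, mul_apply_eq_comp N T y⟩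
  have hN'W : ∀ v ∈ W, N' v ∈ W := by
    rintro v ⟨T, hT, rfl⟩
    refine ⟨star N * T, mul_mem (star_mem hNmem) hT, ?_⟩
    rw [mul_apply_eq_comp, star_eq_adjoint]
  have hNZ : ∀ v ∈ Z, N v ∈ Z := by
    intro v hv
    exact (hZmemIff _).mpr (map_mem_closure N.continuous ((hZmemIff _).mp hv) hNW)
  have hN'Z : ∀ v ∈ Z, N' v ∈ Z := by
    intro v hv
    exact (hZmemIff _).mpr (map_mem_closure N'.continuous ((hZmemIff _).mp hv) hN'W)
  have hprojZ : ∀ z : H, (Submodule.orthogonalProjectionOnto Z (N z) : H) = N (Submodule.orthogonalProjectionOnto Z z) := by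
    intro z
    refine proj_comm_aux N Z hNZ ?_ z
    intro v hv
    exact hN'Z v hv
  -- jZ intertwines N with N'
  have hjZN : ∀ u : Z, jZ ⟨N (u : H), hNZ _ u.2⟩ = N' (jZ u) := by
    intro u
    refine hdense.induction_on u ?_ ?_
    · apply isClosed_eq
      · exact jZ.continuous.comp (Continuous.subtype_mk (N.continuous.comp continuous_subtype_val) _)
      · exact N'.continuous.comp jZ.continuous
    · intro w
      have h1 : (⟨N ((e w : Z) : H), hNZ _ (e w).2⟩ : Z) = e ⟨N (w : H), hNW _ w.2⟩ := rfl
      rw [h1, hjZ, hjZ, hjR, hjR]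
      obtain ⟨T, hT, hTw⟩ := hWmem w
      rw [hj T hT w hTw.symm,
        hj (N * T) (mul_mem hNmem hT) ⟨N (w : H), hNW _ w.2⟩ (by rw [mul_apply_eq_comp, hTw]),
        star_mul]
      have h2 : star T * star N = star N * star T :=
        hcomm (star T) (star_mem hT) (star N) (star_mem hNmem)
      rw [h2, mul_apply_eq_comp, star_eq_adjoint]
  -- the operator A = C ∘ jZ ∘ P_Z
  have hAbound : ∀ z : H, ‖C (jZ (Submodule.orthogonalProjectionOnto Z z))‖ ≤ ‖jZ‖ * ‖z‖ := by
    intro z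
    rw [Cnorm]
    calc ‖jZ (Submodule.orthogonalProjectionOnto Z z)‖ ≤ ‖jZ‖ * ‖Submodule.orthogonalProjectionOnto Z z‖ := jZ.le_opNorm _
      _ ≤ ‖jZ‖ * ‖z‖ := by
          apply mul_le_mul_of_nonneg_left _ (norm_nonneg jZ)
          calc ‖Submodule.orthogonalProjectionOnto Z z‖ ≤ ‖Submodule.orthogonalProjectionOnto Z‖ * ‖z‖ :=
                (Submodule.orthogonalProjectionOnto Z).le_opNorm z
            _ ≤ 1 * ‖z‖ := by
                have := Submodule.orthogonalProjectionOnto_norm_le Z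
                have h2 : (0:ℝ) ≤ ‖z‖ := norm_nonneg _
                nlinarith
            _ = ‖z‖ := one_mul _
  let A : H →L[ℂ] H := LinearMap.mkContinuous
    { toFun := fun z => C (jZ (Submodule.orthogonalProjectionOnto Z z))
      map_add' := by
        intro a b
        show C (jZ (Submodule.orthogonalProjectionOnto Z (a + b))) =
          C (jZ (Submodule.orthogonalProjectionOnto Z a)) + C (jZ (Submodule.orthogonalProjectionOnto Z b))
        rw [map_add, map_add, Cadd]
      map_smul' := by
        intro a z
        show C (jZ (Submodule.orthogonalProjectionOnto Z (a • z))) = a • C (jZ (Submodule.orthogonalProjectionOnto Z z))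
        rw [map_smul, hjZsmul, Csmul]
        simp }
    ‖jZ‖ hAbound
  have hAapp : ∀ z : H, A z = C (jZ (Submodule.orthogonalProjectionOnto Z z)) := fun z => rfl
  have hAN : A ∘L N = N ∘L A := by
    ext z
    show A (N z) = N (A z)
    rw [hAapp, hAapp]
    have h1 : Submodule.orthogonalProjectionOnto Z (N z) =
        ⟨N ((Submodule.orthogonalProjectionOnto Z z : Z) : H), hNZ _ (Submodule.orthogonalProjectionOnto Z z).2⟩ :=
      Subtype.ext (hprojZ z)
    rw [h1, hjZN, ← NC]
  -- compute A y = x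
  have hyW : y ∈ W := ⟨1, one_mem _, ContinuousLinearMap.one_apply y⟩
  have hyZ : y ∈ Z := W.le_topologicalClosure hyW
  have hAy : A y = x := by
    rw [hAapp]
    have h1 : Submodule.orthogonalProjectionOnto Z y = ⟨y, hyZ⟩ :=
      Submodule.orthogonalProjectionOnto_mem_subspace_eq_self (⟨y, hyZ⟩ : Z)
    have h2 : (⟨y, hyZ⟩ : Z) = e ⟨y, hyW⟩ := rfl
    rw [h1, h2, hjZ, hjR, hj 1 (one_mem _) ⟨y, hyW⟩ (ContinuousLinearMap.one_apply y).symm,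
      star_one, ContinuousLinearMap.one_apply, hCy]
  -- conclude
  have hxM : x ∈ M := by
    have := hMhyper A hAN y hyM
    rwa [hAy] at this
  have hx0 : x = 0 := by
    rw [Submodule.mem_orthogonal] at hxOrth
    have := hxOrth x hxM
    rwa [inner_self_eq_zero] at this
  have : C m = (Submodule.orthogonalProjectionOnto M (C m) : H) := by
    have := hx0
    rw [hxdef, sub_eq_zero] at this
    exact this
  rw [this]
  exact (Submodule.orthogonalProjectionOnto M (C m)).2
end

section
/- There exist a complex Hilbert space H, an operator T ∈ B(H), and a closed subspace M of H such that CM ⊆ M for every conjugation C with CTC = T*, yet M is not invariant under T (so M is not hyperinvariant for T). Concretely, take orthonormal x, y ∈ H, T = x⊗x + i(x+y)⊗(x+y), and M = span{x}. -/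
open scoped ComplexInnerProductSpace

open Complex Matrix

/-- There exist an operator `T` on a complex Hilbert space and a closed subspace `M`
which is invariant under every conjugation `C` with `CTC = T*`, yet `M` is not
invariant under `T` itself (so `M` is not hyperinvariant for `T`). -/
theorem exists_nonhyperinvariant_conjugation_invariant :
    ∃ (T : EuclideanSpace ℂ (Fin 2) →L[ℂ] EuclideanSpace ℂ (Fin 2))
      (M : Submodule ℂ (EuclideanSpace ℂ (Fin 2))),
      IsClosed (M : Set (EuclideanSpace ℂ (Fin 2))) ∧
      (∀ C : EuclideanSpace ℂ (Fin 2) → EuclideanSpace ℂ (Fin 2),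
        IsConjugation C → (∀ h, C (T (C h)) = ContinuousLinearMap.adjoint T h) →
        ∀ m ∈ M, C m ∈ M) ∧
      ¬ (∀ m ∈ M, T m ∈ M) := by
  set Mat : Matrix (Fin 2) (Fin 2) ℂ := !![1+I, I; I, I] with hMat
  set T := Matrix.toEuclideanCLM (𝕜 := ℂ) (n := Fin 2) Mat with hT
  set S := Matrix.toEuclideanCLM (𝕜 := ℂ) (n := Fin 2) Matᴴ with hS
  have hadj : ContinuousLinearMap.adjoint T = S := by
    rw [← ContinuousLinearMap.star_eq_adjoint, hT, hS, ← map_star]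
    rfl
  have ell : EuclideanSpace ℂ (Fin 2) →ₗ[ℂ] ℂ :=
    { toFun := fun h => h 1, map_add' := fun _ _ => rfl, map_smul' := fun _ _ => rfl }
  refine ⟨T, LinearMap.ker
      ({ toFun := fun h => h 1, map_add' := fun _ _ => rfl, map_smul' := fun _ _ => rfl } :
        EuclideanSpace ℂ (Fin 2) →ₗ[ℂ] ℂ), ?_, ?_, ?_⟩
  · exact Submodule.closed_of_finiteDimensional _
  · rintro C ⟨hadd, hsmul, hinv, -⟩ hCT m hm
    simp only [LinearMap.mem_ker, LinearMap.coe_mk, AddHom.coe_mk] at hm ⊢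
    change m 1 = 0 at hm; change C m 1 = 0
    rw [hadj] at hCT
    have hCTh : ∀ h, C (T h) = S (C h) := by
      intro h
      have := hCT (C h); rwa [hinv] at this
    have hCSh : ∀ h, C (S h) = T (C h) := by
      intro h
      have := congrArg C (hCT h); rw [hinv] at this; exact this.symm
    -- coordinate 1 of (T + S) h is always 0
    have hcoord1 : ∀ h : EuclideanSpace ℂ (Fin 2), T h 1 + S h 1 = 0 := by
      intro h
      show Mat.mulVec h 1 + Matᴴ.mulVec h 1 = 0
      simp [hMat, Matrix.mulVec, dotProduct, Fin.sum_univ_two, Matrix.conjTranspose_apply]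
      ring
    -- (T + S) m = 2 • m since m 1 = 0
    have hTSm : T m + S m = (2:ℂ) • m := by
      ext i
      have h0 : T m i + S m i = 2 * m i := by
        fin_cases i
        · show Mat.mulVec m 0 + Matᴴ.mulVec m 0 = 2 * m 0
          simp [hMat, Matrix.mulVec, dotProduct, Fin.sum_univ_two,
            Matrix.conjTranspose_apply, hm]
          ring
        · show T m 1 + S m 1 = 2 * m 1
          rw [hcoord1 m, hm]; ring
      simpa using h0
    have key : T (C m) + S (C m) = (2:ℂ) • C m := by
      have h1 : C (T m + S m) = S (C m) + T (C m) := by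
        rw [hadd, hCTh, hCSh]
      rw [hTSm, hsmul] at h1
      rw [add_comm, ← h1]
      congr 1
      simp [Complex.ext_iff]
    have := congrFun (congrArg (fun v : EuclideanSpace ℂ (Fin 2) => (v : Fin 2 → ℂ)) key) 1
    simp only [PiLp.add_apply, PiLp.smul_apply, smul_eq_mul] at this
    rw [hcoord1 (C m)] at this
    have h2 : (2:ℂ) ≠ 0 := two_ne_zero
    field_simp at this
    exact (mul_eq_zero.mp this.symm).resolve_left h2
  · intro hinv
    have := hinv (EuclideanSpace.single 0 1) (by
      rw [LinearMap.mem_ker]; show (EuclideanSpace.single 0 1 : EuclideanSpace ℂ (Fin 2)) 1 = 0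
      simp [LinearMap.mem_ker, EuclideanSpace.single_apply])
    simp only [LinearMap.mem_ker, LinearMap.coe_mk, AddHom.coe_mk] at this
    change Mat.mulVec (EuclideanSpace.single 0 1) 1 = 0 at this
    have h2 : Mat.mulVec (EuclideanSpace.single 0 1) 1 = I := by
      simp [hMat, Matrix.mulVec, dotProduct, Fin.sum_univ_two,
        EuclideanSpace.single_apply]
    exact I_ne_zero (h2.symm.trans this)
end

section
/- Let N ∈ B(H) be normal, C a conjugation with CNC = -N*, and Δ ⊆ ℂ a Borel set with Δ = -Δ. Then C leaves ran(E_N(Δ)) invariant, and the restriction C₀ of C to ran(E_N(Δ)) is a conjugation satisfying C₀ N₀ C₀ = -N₀*, where N₀ is the restriction of N to the reducing subspace ran(E_N(Δ)). -/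
set_option linter.unusedVariables false
set_option linter.unusedSectionVars false


open scoped ComplexInnerProductSpace
open MeasureTheory

/-- `P` is the projection-valued spectral measure of the bounded normal operator `N`. -/
def IsSpectralMeasure {E : Type*} [NormedAddCommGroup E] [InnerProductSpace ℂ E]
    [CompleteSpace E] (N : E →L[ℂ] E) (P : Set ℂ → (E →L[ℂ] E)) : Prop :=
  (∀ Δ : Set ℂ, MeasurableSet Δ → ContinuousLinearMap.adjoint (P Δ) = P Δ) ∧
  (∀ A B : Set ℂ, MeasurableSet A → MeasurableSet B → P A ∘L P B = P (A ∩ B)) ∧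
  P Set.univ = 1 ∧
  (∀ s : ℕ → Set ℂ, (∀ n, MeasurableSet (s n)) → Pairwise (Function.onFun Disjoint s) →
    ∀ x : E, HasSum (fun n => P (s n) x) (P (⋃ n, s n) x)) ∧
  (∀ x : E, ∃ μ : Measure ℂ, IsFiniteMeasure μ ∧
    (∀ Δ : Set ℂ, MeasurableSet Δ → μ Δ = ENNReal.ofReal (‖P Δ x‖ ^ 2)) ∧
    ⟪x, N x⟫ = ∫ z, z ∂μ)

namespace SMaux

variable {H : Type*} [NormedAddCommGroup H] [InnerProductSpace ℂ H] [CompleteSpace H]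
variable {N : H →L[ℂ] H} {P : Set ℂ → (H →L[ℂ] H)}

theorem empty (hP : IsSpectralMeasure N P) : P ∅ = 0 := by
  ext x
  have h := hP.2.2.2.1 (fun _ => ∅) (fun _ => MeasurableSet.empty)
    (fun i j hij => by simp [Function.onFun]) x
  simp only [Set.iUnion_empty] at h
  have h0 := h.summable.tendsto_atTop_zero
  have h2 : Filter.Tendsto (fun _ : ℕ => P ∅ x) Filter.atTop (nhds (P ∅ x)) :=
    tendsto_const_nhds
  have := tendsto_nhds_unique h2 h0
  simpa using this

theorem mul (hP : IsSpectralMeasure N P) {A B : Set ℂ} (hA : MeasurableSet A)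
    (hB : MeasurableSet B) (x : H) : P A (P B x) = P (A ∩ B) x := by
  have := hP.2.1 A B hA hB
  calc P A (P B x) = (P A ∘L P B) x := rfl
    _ = P (A ∩ B) x := by rw [this]

theorem inner_move (hP : IsSpectralMeasure N P) {A : Set ℂ} (hA : MeasurableSet A)
    (x y : H) : ⟪P A x, y⟫ = ⟪x, P A y⟫ := by
  conv_lhs => rw [← hP.1 A hA]
  exact ContinuousLinearMap.adjoint_inner_left (P A) y x

theorem idem (hP : IsSpectralMeasure N P) {A : Set ℂ} (hA : MeasurableSet A) (x : H) :
    P A (P A x) = P A x := by rw [mul hP hA hA, Set.inter_self]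

theorem mem_range_iff (hP : IsSpectralMeasure N P) {A : Set ℂ} (hA : MeasurableSet A)
    (x : H) : x ∈ LinearMap.range (P A : H →ₗ[ℂ] H) ↔ P A x = x := by
  constructor
  · rintro ⟨y, rfl⟩; exact idem hP hA y
  · intro h; exact ⟨x, h⟩

theorem add_compl (hP : IsSpectralMeasure N P) {A : Set ℂ} (hA : MeasurableSet A) (x : H) :
    P A x + P Aᶜ x = x := by
  set s : ℕ → Set ℂ := fun n => if n = 0 then A else if n = 1 then Aᶜ else ∅ with hs
  have hmeas : ∀ n, MeasurableSet (s n) := by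
    intro n; simp only [hs]; split_ifs <;> simp [hA, hA.compl]
  have hdisj : Pairwise (Function.onFun Disjoint s) := by
    intro i j hij
    simp only [Function.onFun, hs]
    split_ifs <;> simp_all <;> first
      | exact disjoint_compl_right
      | exact disjoint_compl_left
  have h1 := hP.2.2.2.1 s hmeas hdisj x
  have huniv : (⋃ n, s n) = Set.univ := by
    apply Set.eq_univ_of_forall
    intro z
    by_cases hz : z ∈ A
    · exact Set.mem_iUnion.2 ⟨0, by simp [hs, hz]⟩
    · exact Set.mem_iUnion.2 ⟨1, by simp [hs, hz]⟩
  rw [huniv, hP.2.2.1] at h1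
  have h2 : HasSum (fun n => P (s n) x) (P (s 0) x + P (s 1) x) := by
    have : ∀ n ∉ ({0, 1} : Finset ℕ), P (s n) x = 0 := by
      intro n hn
      simp only [Finset.mem_insert, Finset.mem_singleton] at hn
      push_neg at hn
      simp [hs, hn.1, hn.2, empty hP]
    have : HasSum _ _ := hasSum_sum_of_ne_finset_zero this
    simpa using this
  have := h1.unique h2
  simp only [hs] at this
  simpa using this.symm

theorem disjoint_zero (hP : IsSpectralMeasure N P) {A B : Set ℂ} (hA : MeasurableSet A)
    (hB : MeasurableSet B) (hd : A ∩ B = ∅) (x : H) : P A (P B x) = 0 := by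
  rw [mul hP hA hB, hd, empty hP]; rfl

end SMaux

namespace SMaux

variable {H : Type*} [NormedAddCommGroup H] [InnerProductSpace ℂ H] [CompleteSpace H]
variable {N : H →L[ℂ] H} {P : Set ℂ → (H →L[ℂ] H)}

theorem proj_orth (hP : IsSpectralMeasure N P) {A : Set ℂ} (hA : MeasurableSet A)
    {u v : H} (hu : P A u = u) (hv : P Aᶜ v = v) {S : Set ℂ} (hS : MeasurableSet S) :
    ⟪P S u, P S v⟫ = 0 := by
  rw [inner_move hP hS, mul hP hS hS]
  conv_lhs => rw [← hv]
  rw [mul hP (hS.inter hS) hA.compl]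
  have : (S ∩ S) ∩ Aᶜ = (S ∩ Aᶜ) := by rw [Set.inter_self]
  rw [this]
  conv_lhs => rw [← hu]
  rw [← inner_move hP (hS.inter hA.compl), mul hP (hS.inter hA.compl) hA]
  have h0 : (S ∩ Aᶜ) ∩ A = ∅ := by
    ext z; simp only [Set.mem_inter_iff, Set.mem_compl_iff, Set.mem_empty_iff_false]
    tauto
  rw [h0, empty hP]
  simp

theorem cross_inner_zero (hP : IsSpectralMeasure N P) {A : Set ℂ} (hA : MeasurableSet A)
    {u v : H} (hu : P A u = u) (hv : P Aᶜ v = v) :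
    ⟪u, N v⟫ = 0 ∧ ⟪v, N u⟫ = 0 := by
  -- quadratic form is independent of unimodular c in u + c • v
  have hq : ∀ c : ℂ, ‖c‖ = 1 → ⟪u + c • v, N (u + c • v)⟫ = ⟪u + v, N (u + v)⟫ := by
    intro c hc
    obtain ⟨μ₁, hμ₁f, hμ₁, hint₁⟩ := hP.2.2.2.2 (u + v)
    obtain ⟨μ₂, hμ₂f, hμ₂, hint₂⟩ := hP.2.2.2.2 (u + c • v)
    have hnorm : ∀ S : Set ℂ, MeasurableSet S →
        ‖P S (u + c • v)‖ ^ 2 = ‖P S (u + v)‖ ^ 2 := by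
      intro S hS
      have horth := proj_orth hP hA hu hv hS
      have e1 : P S (u + c • v) = P S u + c • P S v := by
        rw [map_add, ContinuousLinearMap.map_smul]
      have e2 : P S (u + v) = P S u + P S v := by rw [map_add]
      have n1 : ‖P S u + c • P S v‖ ^ 2 = ‖P S u‖ ^ 2 + ‖P S v‖ ^ 2 := by
        have := norm_add_sq (𝕜 := ℂ) (P S u) (c • P S v)
        have hz : ⟪P S u, c • P S v⟫ = 0 := by rw [inner_smul_right, horth, mul_zero]
        rw [hz] at this
        simp only [map_zero, mul_zero, add_zero] at this
        rw [this, norm_smul, hc]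
        ring
      have n2 : ‖P S u + P S v‖ ^ 2 = ‖P S u‖ ^ 2 + ‖P S v‖ ^ 2 := by
        have := norm_add_sq (𝕜 := ℂ) (P S u) (P S v)
        rw [horth] at this
        simp only [map_zero, mul_zero, add_zero] at this
        rw [this]
      rw [e1, e2, n1, n2]
    have hμeq : μ₂ = μ₁ := by
      ext S hS
      rw [hμ₂ S hS, hμ₁ S hS, hnorm S hS]
    rw [hint₁, hint₂, hμeq]
  have expand : ∀ c : ℂ, ⟪u + c • v, N (u + c • v)⟫ =
      ⟪u, N u⟫ + (starRingEnd ℂ) c * ⟪v, N u⟫ + c * ⟪u, N v⟫ +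
        ((starRingEnd ℂ) c * c) * ⟪v, N v⟫ := by
    intro c
    simp only [map_add, ContinuousLinearMap.map_smul, inner_add_left, inner_add_right,
      inner_smul_left, inner_smul_right]
    ring
  have expand1 : ⟪u + v, N (u + v)⟫ =
      ⟪u, N u⟫ + ⟪v, N u⟫ + ⟪u, N v⟫ + ⟪v, N v⟫ := by
    simp only [map_add, inner_add_left, inner_add_right]
    ring
  have h1 := hq (-1) (by simp)
  have hi := hq Complex.I (by simp)
  rw [expand, expand1] at h1
  rw [expand, expand1] at hi
  simp only [map_neg, map_one, Complex.conj_I] at h1 hi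
  have hab : ⟪u, N v⟫ + ⟪v, N u⟫ = 0 := by linear_combination (-1/2 : ℂ) * h1
  have haeqb : ⟪u, N v⟫ - ⟪v, N u⟫ = 0 := by
    linear_combination (-Complex.I) * hi + (-Complex.I) * hab +
      (⟪u, N v⟫ - ⟪v, N u⟫ - Complex.I * ⟪v, N v⟫) * Complex.I_sq
  constructor
  · linear_combination (1/2 : ℂ) * hab + (1/2 : ℂ) * haeqb
  · linear_combination (1/2 : ℂ) * hab - (1/2 : ℂ) * haeqb



theorem polar_bound (T : H →L[ℂ] H) (S : Submodule ℂ H) (w : ℝ)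
    (hw : ∀ u ∈ S, ‖(⟪u, T u⟫ : ℂ)‖ ≤ w * ‖u‖ ^ 2)
    {x y : H} (hx : x ∈ S) (hy : y ∈ S) :
    ‖(⟪y, T x⟫ : ℂ)‖ ≤ w * (‖x‖ ^ 2 + ‖y‖ ^ 2) := by
  have hid : (4 : ℂ) * ⟪y, T x⟫ =
      ⟪x + y, T (x + y)⟫ - ⟪x - y, T (x - y)⟫ +
      Complex.I * (⟪x + Complex.I • y, T (x + Complex.I • y)⟫ -
        ⟪x - Complex.I • y, T (x - Complex.I • y)⟫) := by
    simp only [map_add, map_sub, ContinuousLinearMap.map_smul, inner_add_left,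
      inner_add_right, inner_sub_left, inner_sub_right, inner_smul_left, inner_smul_right,
      Complex.conj_I]
    linear_combination (2 * (⟪y, T x⟫ : ℂ) - 2 * ⟪x, T y⟫) * Complex.I_sq
  have h4 : (4 : ℝ) * ‖(⟪y, T x⟫ : ℂ)‖ ≤
      ‖(⟪x + y, T (x + y)⟫ : ℂ)‖ + ‖(⟪x - y, T (x - y)⟫ : ℂ)‖ +
      (‖(⟪x + Complex.I • y, T (x + Complex.I • y)⟫ : ℂ)‖ +
       ‖(⟪x - Complex.I • y, T (x - Complex.I • y)⟫ : ℂ)‖) := by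
    calc (4:ℝ) * ‖(⟪y, T x⟫ : ℂ)‖ = ‖(4 : ℂ) * ⟪y, T x⟫‖ := by
          rw [norm_mul]; norm_num
      _ ≤ _ := by
          rw [hid]
          refine (norm_add_le _ _).trans ?_
          gcongr
          · exact norm_sub_le _ _
          · rw [norm_mul, Complex.norm_I, one_mul]
            exact norm_sub_le _ _
  have hb : ∀ u ∈ S, ‖(⟪u, T u⟫ : ℂ)‖ ≤ w * ‖u‖^2 := hw
  have m1 : x + y ∈ S := S.add_mem hx hy
  have m2 : x - y ∈ S := S.sub_mem hx hy
  have m3 : x + Complex.I • y ∈ S := S.add_mem hx (S.smul_mem _ hy)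
  have m4 : x - Complex.I • y ∈ S := S.sub_mem hx (S.smul_mem _ hy)
  have par1 : ‖x + y‖^2 + ‖x - y‖^2 = 2*(‖x‖^2 + ‖y‖^2) := by
    have := parallelogram_law_with_norm ℂ x y
    ring_nf at this ⊢; linarith
  have par2 : ‖x + Complex.I • y‖^2 + ‖x - Complex.I • y‖^2 = 2*(‖x‖^2 + ‖y‖^2) := by
    have := parallelogram_law_with_norm ℂ x (Complex.I • y)
    have hIy : ‖Complex.I • y‖ = ‖y‖ := by
      rw [norm_smul, Complex.norm_I, one_mul]
    rw [hIy] at this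
    ring_nf at this ⊢; linarith
  have hsum := h4.trans (by
    have b1 := hb _ m1; have b2 := hb _ m2; have b3 := hb _ m3; have b4 := hb _ m4
    linarith : (‖(⟪x + y, T (x + y)⟫ : ℂ)‖ + ‖(⟪x - y, T (x - y)⟫ : ℂ)‖ +
      (‖(⟪x + Complex.I • y, T (x + Complex.I • y)⟫ : ℂ)‖ +
       ‖(⟪x - Complex.I • y, T (x - Complex.I • y)⟫ : ℂ)‖)) ≤
      w * (‖x + y‖^2 + ‖x - y‖^2 + (‖x + Complex.I • y‖^2 + ‖x - Complex.I • y‖^2)))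
  rw [par1] at hsum
  -- hsum : 4 * ‖⟪y,Tx⟫‖ ≤ w * (2(‖x‖²+‖y‖²) + 2(‖x‖²+‖y‖²))
  have : w * (2*(‖x‖^2 + ‖y‖^2) + (‖x + Complex.I • y‖^2 + ‖x - Complex.I • y‖^2)) =
      w * (2*(‖x‖^2 + ‖y‖^2) + 2*(‖x‖^2 + ‖y‖^2)) := by rw [par2]
  rw [this] at hsum
  linarith

theorem norm_bound_of_numrange (T : H →L[ℂ] H) (S : Submodule ℂ H) (w : ℝ) (hw0 : 0 ≤ w)
    (hinv : ∀ u ∈ S, T u ∈ S)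
    (hw : ∀ u ∈ S, ‖(⟪u, T u⟫ : ℂ)‖ ≤ w * ‖u‖ ^ 2)
    {x : H} (hx : x ∈ S) : ‖T x‖ ≤ 2 * w * ‖x‖ := by
  by_cases hTx : T x = 0
  · rw [hTx, norm_zero]; positivity
  by_cases hx0 : x = 0
  · rw [hx0, map_zero] at hTx; exact absurd rfl hTx
  have hTxS : T x ∈ S := hinv x hx
  set t : ℝ := ‖x‖ / ‖T x‖ with ht
  have htpos : 0 < t := div_pos (norm_pos_iff.2 hx0) (norm_pos_iff.2 hTx)
  have hyS : (t : ℂ) • T x ∈ S := S.smul_mem _ hTxS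
  have hinner : ‖(⟪(t:ℂ) • T x, T x⟫ : ℂ)‖ = t * ‖T x‖^2 := by
    rw [inner_smul_left]
    rw [norm_mul]
    have : (⟪T x, T x⟫ : ℂ) = (‖T x‖^2 : ℝ) := by exact_mod_cast inner_self_eq_norm_sq_to_K (T x)
    rw [this]
    rw [RCLike.norm_conj, Complex.norm_real, Complex.norm_real, Real.norm_eq_abs,
      Real.norm_eq_abs, abs_of_pos htpos, abs_of_nonneg (sq_nonneg _)]
  have hnorm : ‖(t:ℂ) • T x‖ = t * ‖T x‖ := by
    rw [norm_smul]
    simp [abs_of_pos htpos]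
  have := polar_bound T S w hw hx hyS
  rw [hinner, hnorm] at this
  have hTxpos : 0 < ‖T x‖ := norm_pos_iff.2 hTx
  have hval : t * ‖T x‖ = ‖x‖ := by
    rw [ht, div_mul_cancel₀ _ hTxpos.ne']
  have h2 : t * ‖T x‖^2 ≤ w * (‖x‖^2 + (t*‖T x‖)^2) := by
    calc t * ‖T x‖^2 = ‖(⟪(t:ℂ) • T x, T x⟫ : ℂ)‖ := hinner.symm
      _ ≤ w * (‖x‖ ^ 2 + ‖(t:ℂ) • T x‖ ^ 2) := polar_bound T S w hw hx hyS
      _ = w * (‖x‖^2 + (t*‖T x‖)^2) := by rw [hnorm]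
  rw [hval] at h2
  -- t * ‖Tx‖² = ‖x‖ ‖Tx‖
  have h3 : ‖x‖ * ‖T x‖ ≤ 2 * w * ‖x‖^2 := by
    have : t * ‖T x‖^2 = ‖x‖ * ‖T x‖ := by
      rw [ht]; field_simp
    rw [this] at h2; linarith
  have hxpos : 0 < ‖x‖ := norm_pos_iff.2 hx0
  calc ‖T x‖ = (‖x‖ * ‖T x‖) / ‖x‖ := by field_simp
    _ ≤ (2 * w * ‖x‖^2) / ‖x‖ := by gcongr
    _ = 2 * w * ‖x‖ := by field_simp


theorem proj_full (hP : IsSpectralMeasure N P) {A : Set ℂ} (hA : MeasurableSet A)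
    {w : H} (h0 : ⟪P Aᶜ w, w⟫ = 0) : P A w = w := by
  have h1 : (⟪P Aᶜ w, P Aᶜ w⟫ : ℂ) = 0 := by
    rw [inner_move hP hA.compl w (P Aᶜ w), idem hP hA.compl, ← inner_conj_symm, h0, map_zero]
  have h2 : P Aᶜ w = 0 := inner_self_eq_zero.mp h1
  have h3 := add_compl hP hA w
  rw [h2, add_zero] at h3
  exact h3

theorem invariantN (hP : IsSpectralMeasure N P) {A : Set ℂ} (hA : MeasurableSet A)
    {x : H} (hx : P A x = x) : P A (N x) = N x := by
  apply proj_full hP hA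
  have hv : P Aᶜ (P Aᶜ (N x)) = P Aᶜ (N x) := idem hP hA.compl (N x)
  exact (cross_inner_zero hP hA hx hv).2

theorem invariantNadj (hP : IsSpectralMeasure N P) {A : Set ℂ} (hA : MeasurableSet A)
    {x : H} (hx : P A x = x) : P A (ContinuousLinearMap.adjoint N x) = ContinuousLinearMap.adjoint N x := by
  apply proj_full hP hA
  set v := P Aᶜ (ContinuousLinearMap.adjoint N x) with hvdef
  have hv : P Aᶜ v = v := idem hP hA.compl _
  have h1 : (⟪x, N v⟫ : ℂ) = 0 := (cross_inner_zero hP hA hx hv).1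
  have h2 : (⟪ContinuousLinearMap.adjoint N x, v⟫ : ℂ) = ⟪x, N v⟫ :=
    ContinuousLinearMap.adjoint_inner_left N v x
  rw [← inner_conj_symm, h2, h1, map_zero]

theorem num_bound (hP : IsSpectralMeasure N P) {A : Set ℂ} (hA : MeasurableSet A)
    {z₀ : ℂ} {ε : ℝ} (hsub : A ⊆ Metric.closedBall z₀ ε)
    {x : H} (hx : P A x = x) :
    ‖(⟪x, N x⟫ : ℂ) - z₀ * ((‖x‖ : ℂ) ^ 2)‖ ≤ ε * ‖x‖ ^ 2 := by
  obtain ⟨μ, hf, hμ, hint⟩ := hP.2.2.2.2 x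
  have hcompl : P Aᶜ x = 0 := by
    rw [← hx, mul hP hA.compl hA, Set.compl_inter_self, empty hP]
    rfl
  have hμc : μ Aᶜ = 0 := by
    rw [hμ Aᶜ hA.compl, hcompl]
    simp
  have hae : ∀ᵐ z ∂μ, z ∈ A := by
    rw [MeasureTheory.ae_iff]
    simpa [Set.compl_def] using hμc
  have haeb : ∀ᵐ z ∂μ, ‖z - z₀‖ ≤ ε := by
    refine hae.mono (fun z hz => ?_)
    have := hsub hz
    rw [Metric.mem_closedBall, Complex.dist_eq] at this
    simpa using this
  have haeb2 : ∀ᵐ z ∂μ, ‖z‖ ≤ ‖z₀‖ + ε := by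
    refine haeb.mono (fun z hz => ?_)
    calc ‖z‖ = ‖(z - z₀) + z₀‖ := by rw [sub_add_cancel]
      _ ≤ ‖z - z₀‖ + ‖z₀‖ := norm_add_le _ _
      _ ≤ ‖z₀‖ + ε := by linarith
  have hmi : Integrable (fun z : ℂ => z) μ := by
    refine MeasureTheory.Integrable.mono' (integrable_const (‖z₀‖ + ε)) ?_ haeb2
    exact aestronglyMeasurable_id
  have huniv : (μ Set.univ).toReal = ‖x‖ ^ 2 := by
    rw [hμ Set.univ MeasurableSet.univ, hP.2.2.1]
    simp [ENNReal.toReal_ofReal (sq_nonneg ‖x‖)]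
  have hsplit : (⟪x, N x⟫ : ℂ) - z₀ * ((‖x‖ : ℂ) ^ 2) = ∫ z, (z - z₀) ∂μ := by
    rw [MeasureTheory.integral_sub hmi (integrable_const z₀), integral_const, hint, measureReal_def, huniv]
    rw [Complex.real_smul]
    push_cast
    ring
  rw [hsplit]
  have := MeasureTheory.norm_integral_le_of_norm_le (f := fun z : ℂ => z - z₀)
    (integrable_const ε) haeb
  refine this.trans ?_
  rw [integral_const, measureReal_def, huniv]
  simp [smul_eq_mul, mul_comm]

theorem norm_sub_bound (hP : IsSpectralMeasure N P) {A : Set ℂ} (hA : MeasurableSet A)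
    {z₀ : ℂ} {ε : ℝ} (hε : 0 ≤ ε) (hsub : A ⊆ Metric.closedBall z₀ ε)
    {x : H} (hx : x ∈ LinearMap.range (P A : H →ₗ[ℂ] H)) : ‖N x - z₀ • x‖ ≤ 2 * ε * ‖x‖ := by
  set T : H →L[ℂ] H := N - z₀ • ContinuousLinearMap.id ℂ H with hT
  have hTapp : ∀ u : H, T u = N u - z₀ • u := by
    intro u; simp [hT]
  set S : Submodule ℂ H := LinearMap.range (P A : H →ₗ[ℂ] H) with hS
  have hmem : ∀ u, u ∈ S ↔ P A u = u := fun u => mem_range_iff hP hA u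
  have hinv : ∀ u ∈ S, T u ∈ S := by
    intro u hu
    rw [hmem] at hu ⊢
    rw [hTapp, map_sub, ContinuousLinearMap.map_smul, invariantN hP hA hu, hu]
  have hw : ∀ u ∈ S, ‖(⟪u, T u⟫ : ℂ)‖ ≤ ε * ‖u‖ ^ 2 := by
    intro u hu
    rw [hmem] at hu
    have h1 : (⟪u, T u⟫ : ℂ) = ⟪u, N u⟫ - z₀ * ((‖u‖ : ℂ) ^ 2) := by
      rw [hTapp, inner_sub_right, inner_smul_right]
      congr 2
      exact_mod_cast inner_self_eq_norm_sq_to_K u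
    rw [h1]
    exact num_bound hP hA hsub hu
  have := norm_bound_of_numrange T S ε hε hinv hw hx
  rw [hTapp] at this
  exact this

theorem normadj_sub_bound (hP : IsSpectralMeasure N P) {A : Set ℂ} (hA : MeasurableSet A)
    {z₀ : ℂ} {ε : ℝ} (hε : 0 ≤ ε) (hsub : A ⊆ Metric.closedBall z₀ ε)
    {x : H} (hx : x ∈ LinearMap.range (P A : H →ₗ[ℂ] H)) :
    ‖ContinuousLinearMap.adjoint N x - (starRingEnd ℂ) z₀ • x‖ ≤ 2 * ε * ‖x‖ := by
  set T : H →L[ℂ] H := ContinuousLinearMap.adjoint N - (starRingEnd ℂ) z₀ • ContinuousLinearMap.id ℂ H with hT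
  have hTapp : ∀ u : H, T u = ContinuousLinearMap.adjoint N u - (starRingEnd ℂ) z₀ • u := by
    intro u; simp [hT]
  set S : Submodule ℂ H := LinearMap.range (P A : H →ₗ[ℂ] H) with hS
  have hmem : ∀ u, u ∈ S ↔ P A u = u := fun u => mem_range_iff hP hA u
  have hinv : ∀ u ∈ S, T u ∈ S := by
    intro u hu
    rw [hmem] at hu ⊢
    rw [hTapp, map_sub, ContinuousLinearMap.map_smul, invariantNadj hP hA hu, hu]
  have hw : ∀ u ∈ S, ‖(⟪u, T u⟫ : ℂ)‖ ≤ ε * ‖u‖ ^ 2 := by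
    intro u hu
    rw [hmem] at hu
    have e1 : (⟪u, ContinuousLinearMap.adjoint N u⟫ : ℂ) = (starRingEnd ℂ) ⟪u, N u⟫ := by
      rw [← inner_conj_symm]
      congr 1
      exact ContinuousLinearMap.adjoint_inner_left N u u
    have e2 : (⟪u, u⟫ : ℂ) = ((‖u‖ : ℂ) ^ 2) := by
      exact_mod_cast inner_self_eq_norm_sq_to_K u
    have h1 : (⟪u, T u⟫ : ℂ) =
        (starRingEnd ℂ) (⟪u, N u⟫ - z₀ * ((‖u‖ : ℂ) ^ 2)) := by
      rw [hTapp, inner_sub_right, inner_smul_right, e1, e2, map_sub, map_mul, map_pow,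
        Complex.conj_ofReal]
    rw [h1, RCLike.norm_conj]
    exact num_bound hP hA hsub hu
  have := norm_bound_of_numrange T S ε hε hinv hw hx
  rw [hTapp] at this
  exact this

theorem ball_sep {Q : Set ℂ → (H →L[ℂ] H)}
    (hP : IsSpectralMeasure N P) (hQ : IsSpectralMeasure N Q)
    {B₁ B₂ : Set ℂ} (hB1 : MeasurableSet B₁) (hB2 : MeasurableSet B₂)
    {z₁ z₂ : ℂ} {ε δ : ℝ} (hε : 0 ≤ ε) (hδ : 0 ≤ δ)
    (hs1 : B₁ ⊆ Metric.closedBall z₁ ε) (hs2 : B₂ ⊆ Metric.closedBall z₂ δ)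
    (hfar : 2 * ε + 2 * δ < ‖z₁ - z₂‖)
    {x y : H} (hx : x ∈ LinearMap.range (P B₁ : H →ₗ[ℂ] H)) (hy : y ∈ LinearMap.range (Q B₂ : H →ₗ[ℂ] H)) :
    (⟪y, x⟫ : ℂ) = 0 := by
  set c : ℂ := z₂ - z₁ with hc
  set M : ℝ := 2 * ε + 2 * δ with hM
  have hM0 : 0 ≤ M := by positivity
  have hcnorm : ‖c‖ = ‖z₁ - z₂‖ := by rw [hc, norm_sub_rev]
  have hcpos : 0 < ‖c‖ := by rw [hcnorm]; linarith
  have key : ∀ x' ∈ LinearMap.range (P B₁ : H →ₗ[ℂ] H), ∀ y' ∈ LinearMap.range (Q B₂ : H →ₗ[ℂ] H),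
      c * ⟪y', x'⟫ = ⟪y', N x' - z₁ • x'⟫ -
        ⟪ContinuousLinearMap.adjoint N y' - (starRingEnd ℂ) z₂ • y', x'⟫ := by
    intro x' _ y' _
    have hadj : (⟪ContinuousLinearMap.adjoint N y', x'⟫ : ℂ) = ⟪y', N x'⟫ :=
      ContinuousLinearMap.adjoint_inner_left N x' y'
    rw [inner_sub_right, inner_sub_left, inner_smul_right, inner_smul_left, hadj]
    rw [starRingEnd_self_apply]
    ring
  have claim : ∀ k : ℕ, ∀ x' ∈ LinearMap.range (P B₁ : H →ₗ[ℂ] H), ∀ y' ∈ LinearMap.range (Q B₂ : H →ₗ[ℂ] H),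
      ‖c‖ ^ k * ‖(⟪y', x'⟫ : ℂ)‖ ≤ M ^ k * (‖x'‖ * ‖y'‖) := by
    intro k
    induction k with
    | zero =>
      intro x' _ y' _
      have := norm_inner_le_norm (𝕜 := ℂ) y' x'
      simpa [mul_comm] using this
    | succ k ih =>
      intro x' hx' y' hy'
      have hax : N x' - z₁ • x' ∈ LinearMap.range (P B₁ : H →ₗ[ℂ] H) := by
        rw [mem_range_iff hP hB1] at hx' ⊢
        rw [map_sub, ContinuousLinearMap.map_smul, invariantN hP hB1 hx', hx']
      have hby : ContinuousLinearMap.adjoint N y' - (starRingEnd ℂ) z₂ • y' ∈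
          LinearMap.range (Q B₂ : H →ₗ[ℂ] H) := by
        rw [mem_range_iff hQ hB2] at hy' ⊢
        rw [map_sub, ContinuousLinearMap.map_smul, invariantNadj hQ hB2 hy', hy']
      have hna : ‖N x' - z₁ • x'‖ ≤ 2 * ε * ‖x'‖ := norm_sub_bound hP hB1 hε hs1 hx'
      have hnb : ‖ContinuousLinearMap.adjoint N y' - (starRingEnd ℂ) z₂ • y'‖ ≤ 2 * δ * ‖y'‖ :=
        normadj_sub_bound hQ hB2 hδ hs2 hy'
      have i1 := ih (N x' - z₁ • x') hax y' hy'
      have i2 := ih x' hx' _ hby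
      have hkey := key x' hx' y' hy'
      have step : ‖c‖ ^ (k+1) * ‖(⟪y', x'⟫ : ℂ)‖ =
          ‖c‖ ^ k * ‖c * ⟪y', x'⟫‖ := by
        rw [norm_mul, pow_succ]
        ring
      rw [step, hkey]
      have tri : ‖(⟪y', N x' - z₁ • x'⟫ : ℂ) -
          ⟪ContinuousLinearMap.adjoint N y' - (starRingEnd ℂ) z₂ • y', x'⟫‖ ≤
          ‖(⟪y', N x' - z₁ • x'⟫ : ℂ)‖ +
          ‖(⟪ContinuousLinearMap.adjoint N y' - (starRingEnd ℂ) z₂ • y', x'⟫ : ℂ)‖ :=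
        norm_sub_le _ _
      have hck : (0:ℝ) ≤ ‖c‖ ^ k := by positivity
      calc ‖c‖ ^ k * ‖(⟪y', N x' - z₁ • x'⟫ : ℂ) -
          ⟪ContinuousLinearMap.adjoint N y' - (starRingEnd ℂ) z₂ • y', x'⟫‖
          ≤ ‖c‖ ^ k * (‖(⟪y', N x' - z₁ • x'⟫ : ℂ)‖ +
            ‖(⟪ContinuousLinearMap.adjoint N y' - (starRingEnd ℂ) z₂ • y', x'⟫ : ℂ)‖) := by
            exact mul_le_mul_of_nonneg_left tri hck
        _ = ‖c‖ ^ k * ‖(⟪y', N x' - z₁ • x'⟫ : ℂ)‖ +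
            ‖c‖ ^ k * ‖(⟪ContinuousLinearMap.adjoint N y' - (starRingEnd ℂ) z₂ • y', x'⟫ : ℂ)‖ := by
            ring
        _ ≤ M ^ k * (‖N x' - z₁ • x'‖ * ‖y'‖) +
            M ^ k * (‖x'‖ * ‖ContinuousLinearMap.adjoint N y' - (starRingEnd ℂ) z₂ • y'‖) := by
            exact add_le_add i1 i2
        _ ≤ M ^ k * ((2 * ε * ‖x'‖) * ‖y'‖) + M ^ k * (‖x'‖ * (2 * δ * ‖y'‖)) := by
            have hMk : (0:ℝ) ≤ M ^ k := by positivity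
            gcongr
        _ = M ^ (k+1) * (‖x'‖ * ‖y'‖) := by
            rw [pow_succ]
            ring
  have hdecay : ∀ k : ℕ, ‖(⟪y, x⟫ : ℂ)‖ ≤ (M / ‖c‖) ^ k * (‖x‖ * ‖y‖) := by
    intro k
    have := claim k x hx y hy
    rw [div_pow]
    have hckpos : (0:ℝ) < ‖c‖ ^ k := by positivity
    calc ‖(⟪y, x⟫ : ℂ)‖ = (‖c‖ ^ k * ‖(⟪y, x⟫ : ℂ)‖) / ‖c‖ ^ k := by
          exact (mul_div_cancel_left₀ _ hckpos.ne').symm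
      _ ≤ (M ^ k * (‖x‖ * ‖y‖)) / ‖c‖ ^ k := by gcongr
      _ = M ^ k / ‖c‖ ^ k * (‖x‖ * ‖y‖) := by ring
  have hlim : Filter.Tendsto (fun k : ℕ => (M / ‖c‖) ^ k * (‖x‖ * ‖y‖)) Filter.atTop (nhds 0) := by
    have hr : |M / ‖c‖| < 1 := by
      rw [abs_of_nonneg (div_nonneg hM0 hcpos.le)]
      rw [div_lt_one hcpos]
      rw [hcnorm]
      exact lt_of_le_of_lt (le_refl M) (by rw [hM]; exact hfar)
    have := tendsto_pow_atTop_nhds_zero_of_abs_lt_one hr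
    simpa using this.mul_const (‖x‖ * ‖y‖)
  have hle : ‖(⟪y, x⟫ : ℂ)‖ ≤ 0 := ge_of_tendsto hlim (Filter.Eventually.of_forall hdecay)
  exact norm_le_zero_iff.mp hle

theorem sep_orth {Q : Set ℂ → (H →L[ℂ] H)}
    (hP : IsSpectralMeasure N P) (hQ : IsSpectralMeasure N Q)
    {S T : Set ℂ} (hS : MeasurableSet S) (hT : MeasurableSet T)
    {d : ℝ} (hd : 0 < d) (hsep : ∀ s ∈ S, ∀ t ∈ T, d ≤ dist s t)
    {x y : H} (hx : x ∈ LinearMap.range (P S : H →ₗ[ℂ] H)) (hy : y ∈ LinearMap.range (Q T : H →ₗ[ℂ] H)) :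
    (⟪y, x⟫ : ℂ) = 0 := by
  classical
  set r : ℝ := d / 8 with hr
  have hr0 : 0 < r := by positivity
  set e : ℕ → ℂ := TopologicalSpace.denseSeq ℂ with he
  have hdense : DenseRange e := TopologicalSpace.denseRange_denseSeq ℂ
  set D : ℕ → Set ℂ := fun n =>
    Metric.closedBall (e n) r \ ⋃ (m : ℕ) (_ : m < n), Metric.closedBall (e m) r with hD
  have hDmeas : ∀ n, MeasurableSet (D n) := by
    intro n
    exact measurableSet_closedBall.diff
      (MeasurableSet.iUnion fun m => MeasurableSet.iUnion fun _ => measurableSet_closedBall)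
  have hDsub : ∀ n, D n ⊆ Metric.closedBall (e n) r := fun n => Set.diff_subset
  have hDdisj : Pairwise (Function.onFun Disjoint D) := by
    intro i j hij
    rcases lt_or_gt_of_ne hij with h | h
    · refine Set.disjoint_left.mpr ?_
      intro z hzi hzj
      exact hzj.2 (Set.mem_iUnion.2 ⟨i, Set.mem_iUnion.2 ⟨h, hzi.1⟩⟩)
    · refine Set.disjoint_left.mpr ?_
      intro z hzi hzj
      exact hzi.2 (Set.mem_iUnion.2 ⟨j, Set.mem_iUnion.2 ⟨h, hzj.1⟩⟩)
  have hDunion : (⋃ n, D n) = Set.univ := by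
    apply Set.eq_univ_of_forall
    intro z
    have hex : ∃ n, z ∈ Metric.closedBall (e n) r := by
      obtain ⟨n, hn⟩ := hdense.exists_dist_lt z hr0
      exact ⟨n, Metric.mem_closedBall.2 hn.le⟩
    refine Set.mem_iUnion.2 ⟨Nat.find hex, Nat.find_spec hex, ?_⟩
    intro hmem
    obtain ⟨m, hm⟩ := Set.mem_iUnion.1 hmem
    obtain ⟨hlt, hball⟩ := Set.mem_iUnion.1 hm
    exact Nat.find_min hex hlt hball
  have hxfix : P S x = x := (mem_range_iff hP hS x).1 hx
  have hyfix : Q T y = y := (mem_range_iff hQ hT y).1 hy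
  have hsx : HasSum (fun n => P (D n ∩ S) x) x := by
    have hdisj : Pairwise (Function.onFun Disjoint fun n => D n ∩ S) := fun i j hij =>
      (hDdisj hij).mono Set.inter_subset_left Set.inter_subset_left
    have := hP.2.2.2.1 (fun n => D n ∩ S) (fun n => (hDmeas n).inter hS) hdisj x
    have hU : (⋃ n, D n ∩ S) = S := by rw [← Set.iUnion_inter, hDunion, Set.univ_inter]
    rw [hU, hxfix] at this
    exact this
  have hsy : HasSum (fun m => Q (D m ∩ T) y) y := by
    have hdisj : Pairwise (Function.onFun Disjoint fun n => D n ∩ T) := fun i j hij =>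
      (hDdisj hij).mono Set.inter_subset_left Set.inter_subset_left
    have := hQ.2.2.2.1 (fun n => D n ∩ T) (fun n => (hDmeas n).inter hT) hdisj y
    have hU : (⋃ n, D n ∩ T) = T := by rw [← Set.iUnion_inter, hDunion, Set.univ_inter]
    rw [hU, hyfix] at this
    exact this
  have hterm : ∀ n, (⟪y, P (D n ∩ S) x⟫ : ℂ) = 0 := by
    intro n
    set v := P (D n ∩ S) x with hv
    have hvmem : v ∈ LinearMap.range (P (D n ∩ S) : H →ₗ[ℂ] H) := ⟨x, rfl⟩
    have hsub : HasSum (fun m => (⟪v, Q (D m ∩ T) y⟫ : ℂ)) ⟪v, y⟫ :=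
      hsy.mapL (innerSL ℂ v)
    have hzero : ∀ m, (⟪v, Q (D m ∩ T) y⟫ : ℂ) = 0 := by
      intro m
      by_cases h1 : (D n ∩ S).Nonempty
      · by_cases h2 : (D m ∩ T).Nonempty
        · obtain ⟨s₀, hs₀⟩ := h1
          obtain ⟨t₀, ht₀⟩ := h2
          have hfar : 2 * r + 2 * r < ‖e n - e m‖ := by
            have h4 := hsep s₀ hs₀.2 t₀ ht₀.2
            have hd1 : dist s₀ (e n) ≤ r := Metric.mem_closedBall.1 (hDsub n hs₀.1)
            have hd2 : dist t₀ (e m) ≤ r := Metric.mem_closedBall.1 (hDsub m ht₀.1)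
            have htri : dist s₀ t₀ ≤ dist s₀ (e n) + dist (e n) (e m) + dist (e m) t₀ :=
              dist_triangle4 _ _ _ _
            have hne : dist (e n) (e m) = ‖e n - e m‖ := dist_eq_norm _ _
            have hcm : dist (e m) t₀ = dist t₀ (e m) := dist_comm _ _
            have hd8 : d = 8 * r := by rw [hr]; ring
            rw [hne, hcm] at htri
            linarith
          have hball := ball_sep hP hQ ((hDmeas n).inter hS) ((hDmeas m).inter hT)
            hr0.le hr0.le (Set.inter_subset_left.trans (hDsub n))
            (Set.inter_subset_left.trans (hDsub m)) hfar hvmem ⟨y, rfl⟩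
          rw [← inner_conj_symm]; exact (congrArg (starRingEnd ℂ) hball).trans (map_zero _)
        · have h0 : D m ∩ T = ∅ := Set.not_nonempty_iff_eq_empty.1 h2
          rw [h0, empty hQ]
          simp
      · have h0 : D n ∩ S = ∅ := Set.not_nonempty_iff_eq_empty.1 h1
        rw [hv, h0, empty hP]
        simp
    have hvy : (⟪v, y⟫ : ℂ) = 0 := hsub.unique (by simpa [hzero] using hasSum_zero)
    rw [← inner_conj_symm, hvy, map_zero]
  have hfin : HasSum (fun n => (⟪y, P (D n ∩ S) x⟫ : ℂ)) ⟪y, x⟫ :=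
    hsx.mapL (innerSL ℂ y)
  exact hfin.unique (by simpa [hterm] using hasSum_zero)

theorem compact_open_le {Q : Set ℂ → (H →L[ℂ] H)}
    (hP : IsSpectralMeasure N P) (hQ : IsSpectralMeasure N Q)
    {K U : Set ℂ} (hK : IsCompact K) (hU : IsOpen U) (hKU : K ⊆ U) (x : H) :
    ‖P K x‖ ≤ ‖Q U x‖ := by
  obtain ⟨d, hd0, hthick⟩ := hK.exists_thickening_subset_open hU hKU
  have hsep : ∀ s ∈ K, ∀ t ∈ Uᶜ, d ≤ dist s t := by
    intro s hs t ht
    by_contra hlt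
    push_neg at hlt
    exact ht (hthick (Metric.mem_thickening_iff.mpr ⟨s, hs, by rwa [dist_comm]⟩))
  set v := P K x with hv
  have hvmem : v ∈ LinearMap.range (P K : H →ₗ[ℂ] H) := ⟨x, rfl⟩
  have hUc : MeasurableSet Uᶜ := hU.measurableSet.compl
  have hz : (⟪Q Uᶜ v, v⟫ : ℂ) = 0 :=
    sep_orth hP hQ hK.measurableSet hUc hd0 hsep hvmem ⟨v, rfl⟩
  have hQv : Q Uᶜ v = 0 := by
    have h1 : (⟪Q Uᶜ v, Q Uᶜ v⟫ : ℂ) = 0 := by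
      rw [inner_move hQ hUc v (Q Uᶜ v), idem hQ hUc, ← inner_conj_symm, hz, map_zero]
    exact inner_self_eq_zero.mp h1
  have hQUv : Q U v = v := by
    have := add_compl hQ hU.measurableSet v
    rwa [hQv, add_zero] at this
  have hsq : (⟪x, v⟫ : ℂ) = (‖v‖ : ℂ) ^ 2 := by
    have e1 : (⟪x, v⟫ : ℂ) = ⟪P K x, P K x⟫ := by
      conv_lhs => rw [hv, ← idem hP hK.measurableSet x]
      rw [← inner_move hP hK.measurableSet x (P K x)]
    rw [e1]
    exact_mod_cast inner_self_eq_norm_sq_to_K (P K x)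
  have hsw : (⟪x, v⟫ : ℂ) = ⟪Q U x, v⟫ := by
    conv_lhs => rw [← hQUv]
    rw [← inner_move hQ hU.measurableSet x v, inner_move hQ hU.measurableSet, hQUv]
  by_cases hv0 : v = 0
  · rw [hv0, norm_zero]
    exact norm_nonneg _
  have hnv : 0 < ‖v‖ := norm_pos_iff.2 hv0
  have hcs : ‖v‖ ^ 2 ≤ ‖Q U x‖ * ‖v‖ := by
    have h1 : ‖(⟪x, v⟫ : ℂ)‖ = ‖v‖ ^ 2 := by
      rw [hsq]
      rw [← Complex.ofReal_pow, Complex.norm_real, Real.norm_eq_abs, abs_of_nonneg (sq_nonneg _)]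
    have h2 : ‖(⟪Q U x, v⟫ : ℂ)‖ ≤ ‖Q U x‖ * ‖v‖ := norm_inner_le_norm _ _
    rw [← hsw] at h2
    rw [← h1]
    exact h2
  have h3 : ‖v‖ * ‖v‖ ≤ ‖Q U x‖ * ‖v‖ := by nlinarith [hcs]
  exact le_of_mul_le_mul_right h3 hnv

theorem norm_apply_le {Q : Set ℂ → (H →L[ℂ] H)}
    (hP : IsSpectralMeasure N P) (hQ : IsSpectralMeasure N Q)
    {A : Set ℂ} (hA : MeasurableSet A) (x : H) : ‖P A x‖ ≤ ‖Q A x‖ := by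
  obtain ⟨μ₁, hf1, hμ1, _⟩ := hP.2.2.2.2 x
  obtain ⟨μ₂, hf2, hμ2, _⟩ := hQ.2.2.2.2 x
  haveI := hf1
  haveI := hf2
  have hKle : ∀ K : Set ℂ, IsCompact K → K ⊆ A → μ₁ K ≤ μ₂ A := by
    intro K hK hKA
    have hKm : μ₁ K = ENNReal.ofReal (‖P K x‖ ^ 2) := hμ1 K hK.measurableSet
    have h2 : μ₁ K ≤ μ₂ K := by
      rw [hKm]
      by_contra hcon
      push_neg at hcon
      obtain ⟨U, hKU, hUo, hUlt⟩ := Set.exists_isOpen_lt_of_lt K _ hcon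
      have hle : ‖P K x‖ ≤ ‖Q U x‖ := compact_open_le hP hQ hK hUo hKU x
      have : ENNReal.ofReal (‖P K x‖ ^ 2) ≤ μ₂ U := by
        rw [hμ2 U hUo.measurableSet]
        exact ENNReal.ofReal_le_ofReal (pow_le_pow_left₀ (norm_nonneg _) hle 2)
      exact absurd hUlt (not_lt.mpr this)
    exact h2.trans (measure_mono hKA)
  have hle : μ₁ A ≤ μ₂ A := by
    by_contra hcon
    push_neg at hcon
    obtain ⟨K, hKA, hK, hgt⟩ :=
      MeasureTheory.Measure.InnerRegular.innerRegular (μ := μ₁) hA (μ₂ A) hcon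
    exact absurd (hKle K hK hKA) (not_le.mpr hgt)
  rw [hμ1 A hA, hμ2 A hA] at hle
  have h2 : ‖P A x‖ ^ 2 ≤ ‖Q A x‖ ^ 2 :=
    (ENNReal.ofReal_le_ofReal_iff (by positivity)).1 hle
  exact (pow_le_pow_iff_left₀ (norm_nonneg _) (norm_nonneg _) (by norm_num)).1 h2

theorem unique_spectral {Q : Set ℂ → (H →L[ℂ] H)}
    (hP : IsSpectralMeasure N P) (hQ : IsSpectralMeasure N Q)
    {A : Set ℂ} (hA : MeasurableSet A) : P A = Q A := by
  have hnorm : ∀ x, ‖P A x‖ = ‖Q A x‖ := fun x =>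
    le_antisymm (norm_apply_le hP hQ hA x) (norm_apply_le hQ hP hA x)
  have hself : ∀ x, (⟪(P A - Q A) x, x⟫ : ℂ) = 0 := by
    intro x
    have e1 : (⟪P A x, x⟫ : ℂ) = (‖P A x‖ : ℂ) ^ 2 := by
      conv_lhs => rw [← idem hP hA x]
      rw [inner_move hP hA (P A x) x]
      exact_mod_cast inner_self_eq_norm_sq_to_K (P A x)
    have e2 : (⟪Q A x, x⟫ : ℂ) = (‖Q A x‖ : ℂ) ^ 2 := by
      conv_lhs => rw [← idem hQ hA x]
      rw [inner_move hQ hA (Q A x) x]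
      exact_mod_cast inner_self_eq_norm_sq_to_K (Q A x)
    rw [ContinuousLinearMap.sub_apply, inner_sub_left, e1, e2, hnorm x, sub_self]
  have hT : ((P A - Q A : H →L[ℂ] H) : H →ₗ[ℂ] H) = 0 :=
    (inner_map_self_eq_zero _).mp (by intro v; exact hself v)
  have h0 : (P A - Q A : H →L[ℂ] H) = 0 := ContinuousLinearMap.coe_injective (hT.trans ContinuousLinearMap.coe_zero.symm)
  exact sub_eq_zero.mp h0

end SMaux

/-- If `CNC = -N*` and `Δ = -Δ`, then `C` leaves `ran E_N(Δ)` invariant, `ran E_N(Δ)`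
reduces `N`, and the restrictions satisfy `C₀N₀C₀ = -N₀*`. -/
theorem conjugation_restricts_to_symmetric_spectral_subspace {H : Type*}
    [NormedAddCommGroup H] [InnerProductSpace ℂ H] [CompleteSpace H]
    (N : H →L[ℂ] H)
    (hN : N ∘L ContinuousLinearMap.adjoint N = ContinuousLinearMap.adjoint N ∘L N)
    (EN : Set ℂ → (H →L[ℂ] H)) (hEN : IsSpectralMeasure N EN)
    (C : H → H) (hC : IsConjugation C)
    (hskew : ∀ h : H, C (N (C h)) = -(ContinuousLinearMap.adjoint N h))
    (Δ : Set ℂ) (hΔm : MeasurableSet Δ) (hΔsym : ∀ z : ℂ, z ∈ Δ ↔ -z ∈ Δ) :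
    (∀ h : H, h ∈ LinearMap.range (EN Δ : H →ₗ[ℂ] H) ↔ C h ∈ LinearMap.range (EN Δ : H →ₗ[ℂ] H)) ∧
    (∀ h ∈ LinearMap.range (EN Δ : H →ₗ[ℂ] H), N h ∈ LinearMap.range (EN Δ : H →ₗ[ℂ] H)) ∧
    (∀ h ∈ LinearMap.range (EN Δ : H →ₗ[ℂ] H),
      ContinuousLinearMap.adjoint N h ∈ LinearMap.range (EN Δ : H →ₗ[ℂ] H)) ∧
    (∀ h ∈ LinearMap.range (EN Δ : H →ₗ[ℂ] H),
      C (N (C h)) = -(ContinuousLinearMap.adjoint N h)) := by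
  obtain ⟨hCadd, hCsmul, hCinv, hCinner⟩ := hC
  -- basic facts about C
  have hCnorm : ∀ x : H, ‖C x‖ = ‖x‖ := by
    intro x
    have h1 : (⟪C x, C x⟫ : ℂ) = ⟪x, x⟫ := hCinner x x
    have h3 : (‖C x‖ : ℝ) ^ 2 = (‖x‖ : ℝ) ^ 2 := by
      rw [inner_self_eq_norm_sq_to_K (𝕜 := ℂ), inner_self_eq_norm_sq_to_K (𝕜 := ℂ)] at h1
      exact_mod_cast h1
    rw [← Real.sqrt_sq (norm_nonneg (C x)), ← Real.sqrt_sq (norm_nonneg x), h3]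
  have hkey2 : ∀ u v : H, (⟪u, C v⟫ : ℂ) = ⟪v, C u⟫ := by
    intro u v
    conv_lhs => rw [← hCinv u]
    rw [hCinner (C u) v]
  have hkey3 : ∀ a y : H, (⟪C a, y⟫ : ℂ) = ⟪C y, a⟫ := by
    intro a y
    conv_lhs => rw [← hCinv y]
    exact hCinner a (C y)
  -- C as a real continuous linear map
  let Crl : H →ₗ[ℝ] H :=
    { toFun := C
      map_add' := hCadd
      map_smul' := fun r x => by
        show C (r • x) = r • C x
        have h1 : (r : ℂ) • x = r • x := by simp
        have e := hCsmul (r : ℂ) x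
        rw [Complex.conj_ofReal] at e
        calc C (r • x) = C ((r : ℂ) • x) := by rw [h1]
          _ = (r : ℂ) • C x := e
          _ = r • C x := by simp }
  let Cr : H →L[ℝ] H := LinearMap.mkContinuous Crl 1 (fun x => by
    simpa [Crl] using (hCnorm x).le)
  have hCr : ∀ x, Cr x = C x := fun _ => rfl
  -- the conjugated spectral measure
  have hQlin : ∀ A : Set ℂ, ∃ T : H →L[ℂ] H, ∀ x, T x = C (EN (Neg.neg ⁻¹' A) (C x)) := by
    intro A
    set L : H →ₗ[ℂ] H :=
      { toFun := fun x => C (EN (Neg.neg ⁻¹' A) (C x))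
        map_add' := fun x y => by
          show C (EN (Neg.neg ⁻¹' A) (C (x + y))) =
            C (EN (Neg.neg ⁻¹' A) (C x)) + C (EN (Neg.neg ⁻¹' A) (C y))
          rw [hCadd, map_add, hCadd]
        map_smul' := fun a x => by
          show C (EN (Neg.neg ⁻¹' A) (C (a • x))) = a • C (EN (Neg.neg ⁻¹' A) (C x))
          rw [hCsmul, ContinuousLinearMap.map_smul, hCsmul, starRingEnd_self_apply] } with hL
    refine ⟨LinearMap.mkContinuous L ‖EN (Neg.neg ⁻¹' A)‖ (fun x => ?_), fun x => rfl⟩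
    simp only [hL, LinearMap.coe_mk, AddHom.coe_mk]
    rw [hCnorm]
    calc ‖EN (Neg.neg ⁻¹' A) (C x)‖ ≤ ‖EN (Neg.neg ⁻¹' A)‖ * ‖C x‖ :=
        (EN (Neg.neg ⁻¹' A)).le_opNorm (C x)
      _ = ‖EN (Neg.neg ⁻¹' A)‖ * ‖x‖ := by rw [hCnorm]
  choose Q hQ using hQlin
  have hnegmeas : ∀ {A : Set ℂ}, MeasurableSet A → MeasurableSet (Neg.neg ⁻¹' A) :=
    fun hA => hA.preimage measurable_neg
  -- Q is a spectral measure for N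
  have hQspec : IsSpectralMeasure N Q := by
    refine ⟨?_, ?_, ?_, ?_, ?_⟩
    · -- self-adjoint
      intro A hA
      have : ∀ x y : H, (⟪Q A x, y⟫ : ℂ) = ⟪x, Q A y⟫ := by
        intro x y
        calc (⟪Q A x, y⟫ : ℂ) = ⟪C (EN (Neg.neg ⁻¹' A) (C x)), y⟫ := by rw [hQ]
          _ = ⟪C y, EN (Neg.neg ⁻¹' A) (C x)⟫ := hkey3 _ _
          _ = ⟪EN (Neg.neg ⁻¹' A) (C y), C x⟫ :=
              (SMaux.inner_move hEN (hnegmeas hA) (C y) (C x)).symm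
          _ = ⟪x, C (EN (Neg.neg ⁻¹' A) (C y))⟫ := (hkey2 x _).symm
          _ = ⟪x, Q A y⟫ := by rw [hQ]
      refine ContinuousLinearMap.ext fun x => ?_
      apply ext_inner_right ℂ
      intro y
      rw [ContinuousLinearMap.adjoint_inner_left]
      exact (this x y).symm
    · -- multiplicative
      intro A B hA hB
      refine ContinuousLinearMap.ext fun x => ?_
      have e : Neg.neg ⁻¹' (A ∩ B) = (Neg.neg ⁻¹' A) ∩ (Neg.neg ⁻¹' B) := rfl
      calc (Q A ∘L Q B) x = C (EN (Neg.neg ⁻¹' A) (C (C (EN (Neg.neg ⁻¹' B) (C x))))) := by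
            rw [ContinuousLinearMap.comp_apply, hQ, hQ]
        _ = C (EN (Neg.neg ⁻¹' A) (EN (Neg.neg ⁻¹' B) (C x))) := by rw [hCinv]
        _ = C (EN (Neg.neg ⁻¹' (A ∩ B)) (C x)) := by
            rw [SMaux.mul hEN (hnegmeas hA) (hnegmeas hB), e]
        _ = Q (A ∩ B) x := (hQ _ x).symm
    · -- univ
      refine ContinuousLinearMap.ext fun x => ?_
      rw [hQ]
      have : Neg.neg ⁻¹' (Set.univ : Set ℂ) = Set.univ := rfl
      rw [this, hEN.2.2.1]
      simpa using hCinv x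
    · -- countable additivity
      intro s hs hd x
      have hsum := hEN.2.2.2.1 (fun n => Neg.neg ⁻¹' (s n)) (fun n => hnegmeas (hs n))
        (fun i j hij => Disjoint.preimage _ (hd hij)) (C x)
      have hU : (⋃ n, Neg.neg ⁻¹' (s n)) = Neg.neg ⁻¹' (⋃ n, s n) := by
        rw [Set.preimage_iUnion]
      rw [hU] at hsum
      have := hsum.mapL Cr
      simp only [hCr] at this
      convert this using 1
      · funext n
        rw [hQ]
      · rw [hQ]
    · -- moments
      intro x
      obtain ⟨μ, hμf, hμval, hμint⟩ := hEN.2.2.2.2 (C x)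
      haveI := hμf
      refine ⟨Measure.map Neg.neg μ, ?_, ?_, ?_⟩
      · infer_instance
      · intro A hA
        rw [Measure.map_apply measurable_neg hA, hμval _ (hnegmeas hA), hQ]
        rw [hCnorm]
      · have hint : ∫ z, z ∂(Measure.map Neg.neg μ) = ∫ z, -z ∂μ := by
          rw [MeasureTheory.integral_map measurable_neg.aemeasurable]
          exact aestronglyMeasurable_id
        rw [hint, MeasureTheory.integral_neg, ← hμint]
        -- ⟪x, N x⟫ = - ⟪C x, N (C x)⟫
        have h1 : N (C x) = C (-(ContinuousLinearMap.adjoint N x)) := by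
          conv_lhs => rw [← hCinv (N (C x))]
          rw [hskew x]
        have h2 : (⟪C x, N (C x)⟫ : ℂ) = -⟪x, N x⟫ := by
          rw [h1, hCinner, inner_neg_left]
          congr 1
          exact ContinuousLinearMap.adjoint_inner_left N x x
        rw [h2, neg_neg]
  -- conclusion
  have hEQ : EN Δ = Q Δ := SMaux.unique_spectral hEN hQspec hΔm
  have hΔpre : Neg.neg ⁻¹' Δ = Δ := by
    ext z
    simpa [Set.mem_preimage] using (hΔsym z).symm
  refine ⟨?_, ?_, ?_, fun h _ => hskew h⟩
  · intro h
    constructor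
    · intro hh
      have hfix : EN Δ h = h := (SMaux.mem_range_iff hEN hΔm h).1 hh
      rw [SMaux.mem_range_iff hEN hΔm]
      calc EN Δ (C h) = Q Δ (C h) := by rw [hEQ]
        _ = C (EN (Neg.neg ⁻¹' Δ) (C (C h))) := hQ _ _
        _ = C (EN Δ h) := by rw [hΔpre, hCinv]
        _ = C h := by rw [hfix]
    · intro hh
      have hfix : EN Δ (C h) = C h := (SMaux.mem_range_iff hEN hΔm (C h)).1 hh
      rw [SMaux.mem_range_iff hEN hΔm]
      calc EN Δ h = Q Δ h := by rw [hEQ]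
        _ = C (EN (Neg.neg ⁻¹' Δ) (C h)) := hQ _ _
        _ = C (EN Δ (C h)) := by rw [hΔpre]
        _ = C (C h) := by rw [hfix]
        _ = h := hCinv h
  · intro h hh
    rw [SMaux.mem_range_iff hEN hΔm] at hh ⊢
    exact SMaux.invariantN hEN hΔm hh
  · intro h hh
    rw [SMaux.mem_range_iff hEN hΔm] at hh ⊢
    exact SMaux.invariantNadj hEN hΔm hh
end
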